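/- Suppose in addition that G is connected and |V| ≥ 2 (so every vertex has a nonempty neighborhood). Then for every real p with 0 ≤ p ≤ 1, the total expected one-step progress of sample greedy gossip vanishes exactly at consensus: Σ_{s∈V} f_s(p) = 0 if and only if a is constant, i.e., a(u) = a(v) for all u, v ∈ V. In particular, unless all nodes agree on the average, sample greedy gossip makes strictly positive progress in expectation. -/
import Mathlib


open Finset

/-- Maximum of a real-valued function over a finite set (0 on the empty set). -/
noncomputable def finsetMax {α : Type*} (x : α → ℝ) (S : Finset α) : ℝ :=
  if h : S.Nonempty then S.sup' h x else 0

/-- `sggProgress G a s p` is `f_s(p)`: the conditional expectation of the squared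
discrepancy `(a s - a t*)²` of the communication partner `t*` chosen by one step of
sample greedy gossip at node `s` with node activation probability `p`. -/
noncomputable def sggProgress {V : Type*} [Fintype V] [DecidableEq V]
    (G : SimpleGraph V) [DecidableRel G.Adj] (a : V → ℝ) (s : V) (p : ℝ) : ℝ :=
  (∑ m ∈ Finset.Icc 1 (G.neighborFinset s).card,
      p ^ m * (1 - p) ^ ((G.neighborFinset s).card - m) *
        ∑ S ∈ (G.neighborFinset s).powersetCard m,
          finsetMax (fun t => (a s - a t) ^ 2) S)
    + (1 - p) ^ (G.neighborFinset s).card * (1 / ((G.neighborFinset s).card : ℝ)) *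
        ∑ t ∈ G.neighborFinset s, (a s - a t) ^ 2

lemma finsetMax_nonneg {α : Type*} (x : α → ℝ) (hx : ∀ i, 0 ≤ x i) (S : Finset α) :
    0 ≤ finsetMax x S := by
  unfold finsetMax
  split_ifs with h
  · obtain ⟨i, hi⟩ := h
    exact le_trans (hx i) (Finset.le_sup' x hi)
  · exact le_refl 0

lemma le_finsetMax {α : Type*} (x : α → ℝ) {S : Finset α} {t : α} (ht : t ∈ S) :
    x t ≤ finsetMax x S := by
  unfold finsetMax
  rw [dif_pos ⟨t, ht⟩]
  exact Finset.le_sup' x ht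

lemma sggProgress_nonneg {V : Type*} [Fintype V] [DecidableEq V]
    (G : SimpleGraph V) [DecidableRel G.Adj] (a : V → ℝ) (s : V) {p : ℝ}
    (hp : 0 ≤ p) (hp1 : p ≤ 1) : 0 ≤ sggProgress G a s p := by
  have h1p : (0:ℝ) ≤ 1 - p := by linarith
  unfold sggProgress
  have hA : 0 ≤ ∑ m ∈ Finset.Icc 1 (G.neighborFinset s).card,
      p ^ m * (1 - p) ^ ((G.neighborFinset s).card - m) *
        ∑ S ∈ (G.neighborFinset s).powersetCard m,
          finsetMax (fun t => (a s - a t) ^ 2) S := by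
    refine Finset.sum_nonneg fun m _ => ?_
    refine mul_nonneg (mul_nonneg (pow_nonneg hp m) (pow_nonneg h1p _)) ?_
    exact Finset.sum_nonneg fun S _ =>
      finsetMax_nonneg _ (fun t => sq_nonneg _) S
  have hB : 0 ≤ (1 - p) ^ (G.neighborFinset s).card *
      (1 / ((G.neighborFinset s).card : ℝ)) *
      ∑ t ∈ G.neighborFinset s, (a s - a t) ^ 2 := by
    refine mul_nonneg (mul_nonneg (pow_nonneg h1p _) ?_) ?_
    · positivity
    · exact Finset.sum_nonneg fun t _ => sq_nonneg _
  linarith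

lemma sggProgress_eq_zero {V : Type*} [Fintype V] [DecidableEq V]
    (G : SimpleGraph V) [DecidableRel G.Adj] (a : V → ℝ) (s : V) {p : ℝ}
    (hp : 0 ≤ p) (hp1 : p ≤ 1)
    (h0 : sggProgress G a s p = 0) {t : V} (ht : t ∈ G.neighborFinset s) :
    a s = a t := by
  have h1p : (0:ℝ) ≤ 1 - p := by linarith
  set d := (G.neighborFinset s).card with hd
  have hdpos : 0 < d := Finset.card_pos.mpr ⟨t, ht⟩
  have hA : 0 ≤ ∑ m ∈ Finset.Icc 1 d,
      p ^ m * (1 - p) ^ (d - m) *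
        ∑ S ∈ (G.neighborFinset s).powersetCard m,
          finsetMax (fun t => (a s - a t) ^ 2) S := by
    refine Finset.sum_nonneg fun m _ => ?_
    refine mul_nonneg (mul_nonneg (pow_nonneg hp m) (pow_nonneg h1p _)) ?_
    exact Finset.sum_nonneg fun S _ =>
      finsetMax_nonneg _ (fun t => sq_nonneg _) S
  have hB : 0 ≤ (1 - p) ^ d * (1 / (d : ℝ)) *
      ∑ t ∈ G.neighborFinset s, (a s - a t) ^ 2 := by
    refine mul_nonneg (mul_nonneg (pow_nonneg h1p _) ?_) ?_
    · positivity
    · exact Finset.sum_nonneg fun t _ => sq_nonneg _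
  unfold sggProgress at h0
  rw [← hd] at h0
  rcases eq_or_lt_of_le hp with hp0 | hppos
  · -- p = 0 : the uniform term must vanish
    have hAz : (∑ m ∈ Finset.Icc 1 d,
        p ^ m * (1 - p) ^ (d - m) *
          ∑ S ∈ (G.neighborFinset s).powersetCard m,
            finsetMax (fun t => (a s - a t) ^ 2) S) = 0 := by
      refine Finset.sum_eq_zero fun m hm => ?_
      have hm1 : 1 ≤ m := (Finset.mem_Icc.mp hm).1
      rw [← hp0, zero_pow (by omega), zero_mul, zero_mul]
    rw [hAz, zero_add, ← hp0, sub_zero, one_pow, one_mul] at h0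
    have hsum : (∑ t ∈ G.neighborFinset s, (a s - a t) ^ 2) = 0 := by
      have hdne : (1 / (d : ℝ)) ≠ 0 := by
        simp only [one_div, ne_eq, inv_eq_zero, Nat.cast_eq_zero]
        omega
      exact (mul_eq_zero.mp h0).resolve_left hdne
    have := (Finset.sum_eq_zero_iff_of_nonneg
      (fun t _ => sq_nonneg (a s - a t))).mp hsum t ht
    have := sq_eq_zero_iff.mp this
    linarith
  · -- p > 0 : the m = d term must vanish
    have hAz : (∑ m ∈ Finset.Icc 1 d,
        p ^ m * (1 - p) ^ (d - m) *
          ∑ S ∈ (G.neighborFinset s).powersetCard m,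
            finsetMax (fun t => (a s - a t) ^ 2) S) = 0 := by linarith
    have hterm := (Finset.sum_eq_zero_iff_of_nonneg
      (fun m _ => mul_nonneg (mul_nonneg (pow_nonneg hp m) (pow_nonneg h1p _))
        (Finset.sum_nonneg fun S _ =>
          finsetMax_nonneg _ (fun t => sq_nonneg _) S))).mp hAz d
      (Finset.mem_Icc.mpr ⟨hdpos, le_refl d⟩)
    rw [Nat.sub_self, pow_zero, mul_one] at hterm
    have hpow : Finset.powersetCard d (G.neighborFinset s) = {G.neighborFinset s} := by
      rw [hd]; exact Finset.powersetCard_self _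
    rw [hpow, Finset.sum_singleton] at hterm
    have hpdne : p ^ d ≠ 0 := pow_ne_zero d (ne_of_gt hppos)
    have hmax : finsetMax (fun t => (a s - a t) ^ 2) (G.neighborFinset s) = 0 :=
      (mul_eq_zero.mp hterm).resolve_left hpdne
    have hle := le_finsetMax (fun t => (a s - a t) ^ 2) ht
    rw [hmax] at hle
    have := le_antisymm hle (sq_nonneg _)
    have := sq_eq_zero_iff.mp this
    linarith

/-- For a connected graph on at least two vertices, the total expected one-step
progress of sample greedy gossip vanishes exactly at consensus. -/
theorem sum_sggProgress_eq_zero_iff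
    {V : Type*} [Fintype V] [DecidableEq V]
    (G : SimpleGraph V) [DecidableRel G.Adj] (a : V → ℝ)
    (hconn : G.Connected) (hcard : 2 ≤ Fintype.card V)
    (p : ℝ) (hp : 0 ≤ p) (hp1 : p ≤ 1) :
    ∑ s : V, sggProgress G a s p = 0 ↔ ∀ u v : V, a u = a v := by
  constructor
  · intro h0 u v
    have hall : ∀ s : V, sggProgress G a s p = 0 := fun s =>
      (Finset.sum_eq_zero_iff_of_nonneg
        (fun s _ => sggProgress_nonneg G a s hp hp1)).mp h0 s (Finset.mem_univ s)
    have hadj : ∀ x y : V, G.Adj x y → a x = a y := fun x y hxy =>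
      sggProgress_eq_zero G a x hp hp1 (hall x)
        ((SimpleGraph.mem_neighborFinset G x y).mpr hxy)
    obtain ⟨w⟩ := hconn.preconnected u v
    induction w with
    | nil => rfl
    | cons h' w' ih => exact (hadj _ _ h').trans ih
  · intro hc
    refine Finset.sum_eq_zero fun s _ => ?_
    have hzero : ∀ t : V, (a s - a t) ^ 2 = 0 := fun t => by
      rw [hc s t, sub_self]; ring
    unfold sggProgress
    have h1 : (∑ t ∈ G.neighborFinset s, (a s - a t) ^ 2) = 0 :=
      Finset.sum_eq_zero fun t _ => hzero t
    have h2 : ∀ m, (∑ S ∈ (G.neighborFinset s).powersetCard m,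
        finsetMax (fun t => (a s - a t) ^ 2) S) = 0 := by
      intro m
      refine Finset.sum_eq_zero fun S _ => ?_
      unfold finsetMax
      split_ifs with h
      · rw [Finset.sup'_congr h rfl (fun t _ => hzero t)]
        exact Finset.sup'_const h 0
      · rfl
    rw [h1, mul_zero]
    rw [Finset.sum_eq_zero fun m _ => by rw [h2 m, mul_zero]]
    ring
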